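/- Strictly concave-convex games satisfy Rosen's negative-definiteness condition: fix x ∈ ℝ^N and C² payoff functions u_1, …, u_N : ℝ^N → ℝ. Suppose (a) ∂²u_i/∂x_i²(x) < 0 for every i; (b) for every k, the (N−1)×(N−1) matrix (∂²u_k/∂x_i∂x_j(x))_{i≠k, j≠k} is positive semidefinite; and (c) the N×N matrix C with C_{ij} = Σ_{k=1}^N ∂²u_k/∂x_i∂x_j(x) is negative semidefinite. Let G be the N×N matrix with G_{ij} = ∂²u_i/∂x_i∂x_j(x). Then G + Gᵀ = A − Σ_k B^k + C, where A is the diagonal matrix with A_{ii} = ∂²u_i/∂x_i²(x) and B^k is the matrix with B^k_{ij} = ∂²u_k/∂x_i∂x_j(x) if i ≠ k and j ≠ k and B^k_{ij} = 0 otherwise; consequently G + Gᵀ is negative definite. -/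

import Mathlib

open Matrix

/-- Partial derivative of `f : ℝ^N → ℝ` with respect to coordinate `j` at `x`. -/
noncomputable def pd {N : ℕ} (f : (Fin N → ℝ) → ℝ) (j : Fin N) (x : Fin N → ℝ) : ℝ :=
  deriv (fun t => f (Function.update x j t)) (x j)

/-- Second partial derivative `∂²f/∂x_i∂x_j`. -/
noncomputable def pd2 {N : ℕ} (f : (Fin N → ℝ) → ℝ) (i j : Fin N) (x : Fin N → ℝ) : ℝ :=
  pd (pd f j) i x

/-- strictly concave-convex games satisfy Rosen's
negative-definiteness condition.  With `G i j = ∂²u_i/∂x_i∂x_j(x)`,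
`A` diagonal with `A i i = ∂²u_i/∂x_i²(x)`, `B^k i j = ∂²u_k/∂x_i∂x_j(x)` for
`i ≠ k`, `j ≠ k` (else `0`), and `C i j = Σ_k ∂²u_k/∂x_i∂x_j(x)`: if
(a) `A i i < 0` for all `i`, (b) each `B^k` is positive semidefinite, and
(c) `C` is negative semidefinite, then `G + Gᵀ = A − Σ_k B^k + C` and `G + Gᵀ`
is negative definite. -/
lemma hasDerivAt_update' {N : ℕ} (x : Fin N → ℝ) (j : Fin N) (t : ℝ) :
    HasDerivAt (fun s => Function.update x j s) (Pi.single j 1) t := by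
  have h : (fun s : ℝ => Function.update x j s)
      = fun s => (x - (x j) • (Pi.single j 1 : Fin N → ℝ)) + s • (Pi.single j 1 : Fin N → ℝ) := by
    funext s i
    by_cases h : i = j <;> simp [Function.update, h, Pi.single_apply]
  rw [h]
  simpa using ((hasDerivAt_id t).smul_const (Pi.single j 1 : Fin N → ℝ)).const_add (x - (x j) • (Pi.single j 1 : Fin N → ℝ))

lemma pd_eq_fderiv {N : ℕ} {f : (Fin N → ℝ) → ℝ} {x : Fin N → ℝ} {j : Fin N}
    (hf : DifferentiableAt ℝ f x) :
    pd f j x = fderiv ℝ f x (Pi.single j 1) := by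
  have h1 := hasDerivAt_update' x j (x j)
  have hx : Function.update x j (x j) = x := Function.update_eq_self j x
  have h2 : HasDerivAt (fun t => f (Function.update x j t))
      (fderiv ℝ f x (Pi.single j 1)) (x j) := by
    have hfd : HasFDerivAt f (fderiv ℝ f x) (Function.update x j (x j)) := by
      rw [hx]; exact hf.hasFDerivAt
    exact hfd.comp_hasDerivAt (x j) h1
  exact h2.deriv

lemma pd_eq_fderiv_fun {N : ℕ} {f : (Fin N → ℝ) → ℝ} (hf : Differentiable ℝ f) (j : Fin N) :
    pd f j = fun y => fderiv ℝ f y (Pi.single j 1) := by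
  funext y; exact pd_eq_fderiv (hf y)

lemma pd2_symm {N : ℕ} {f : (Fin N → ℝ) → ℝ} (hf : ContDiff ℝ 2 f) (i j : Fin N)
    (x : Fin N → ℝ) : pd2 f i j x = pd2 f j i x := by
  have hdiff : Differentiable ℝ f := hf.differentiable (by norm_num)
  have hf1 : ContDiff ℝ 1 (fderiv ℝ f) := hf.fderiv_right (le_refl 2)
  have key : ∀ a b : Fin N,
      pd2 f a b x = fderiv ℝ (fderiv ℝ f) x (Pi.single a 1) (Pi.single b 1) := by
    intro a b
    have h1 : pd2 f a b x = fderiv ℝ (fun y => fderiv ℝ f y (Pi.single b 1)) x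
        (Pi.single a 1) := by
      rw [pd2, pd_eq_fderiv_fun hdiff b]
      exact pd_eq_fderiv (((hf1.differentiable one_ne_zero) x).clm_apply (differentiableAt_const _))
    rw [h1, fderiv_clm_apply ((hf1.differentiable one_ne_zero) x) (differentiableAt_const _)]
    simp
  rw [key i j, key j i]
  exact second_derivative_symmetric (fun y => (hdiff y).hasFDerivAt)
    ((hf1.differentiable one_ne_zero) x).hasFDerivAt _ _

theorem rosen_condition_concave_convex {N : ℕ} (u : Fin N → (Fin N → ℝ) → ℝ)
    (hu : ∀ i, ContDiff ℝ 2 (u i)) (x : Fin N → ℝ)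
    (G A C : Matrix (Fin N) (Fin N) ℝ) (B : Fin N → Matrix (Fin N) (Fin N) ℝ)
    (hG : ∀ i j, G i j = pd2 (u i) j i x)
    (hA : ∀ i j, A i j = if i = j then pd2 (u i) i i x else 0)
    (hB : ∀ k i j, B k i j = if i ≠ k ∧ j ≠ k then pd2 (u k) i j x else 0)
    (hC : ∀ i j, C i j = ∑ k, pd2 (u k) i j x)
    (ha : ∀ i, pd2 (u i) i i x < 0)
    (hb : ∀ k, ∀ v : Fin N → ℝ, 0 ≤ ∑ i, ∑ j, v i * B k i j * v j)
    (hc : ∀ v : Fin N → ℝ, ∑ i, ∑ j, v i * C i j * v j ≤ 0) :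
    (G + Gᵀ = A - (∑ k, B k) + C) ∧
    (∀ v : Fin N → ℝ, v ≠ 0 → ∑ i, ∑ j, v i * (G + Gᵀ) i j * v j < 0) := by
  have hsym : ∀ k i j : Fin N, pd2 (u k) i j x = pd2 (u k) j i x :=
    fun k i j => pd2_symm (hu k) i j x
  have h1 : G + Gᵀ = A - (∑ k, B k) + C := by
    ext i j
    simp only [Matrix.add_apply, Matrix.sub_apply, Matrix.transpose_apply, Matrix.sum_apply,
      hG, hA, hB, hC]
    rw [hsym i j i]
    have hterm : ∀ k : Fin N,
        pd2 (u k) i j x - (if i ≠ k ∧ j ≠ k then pd2 (u k) i j x else 0)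
          = (if k = i then pd2 (u k) i j x else 0)
            + (if k = j ∧ k ≠ i then pd2 (u k) i j x else 0) := by
      intro k
      by_cases h1 : k = i
      · subst h1; simp
      · by_cases h2 : k = j
        · subst h2; simp [h1, Ne.symm h1]
        · simp [h1, h2, Ne.symm h1, Ne.symm h2]
    have hsum : (∑ k, pd2 (u k) i j x) - (∑ k, if i ≠ k ∧ j ≠ k then pd2 (u k) i j x else 0)
        = pd2 (u i) i j x + (if i = j then 0 else pd2 (u j) i j x) := by
      rw [← Finset.sum_sub_distrib]
      simp_rw [hterm]
      rw [Finset.sum_add_distrib, Finset.sum_ite_eq' Finset.univ i (fun k => pd2 (u k) i j x)]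
      by_cases hij : i = j
      · subst hij
        simp
      · have : (∑ k, if k = j ∧ k ≠ i then pd2 (u k) i j x else 0)
            = ∑ k, if k = j then pd2 (u k) i j x else 0 := by
          refine Finset.sum_congr rfl fun k _ => ?_
          by_cases h2 : k = j
          · subst h2; simp [Ne.symm hij]
          · simp [h2]
        rw [this, Finset.sum_ite_eq' Finset.univ j (fun k => pd2 (u k) i j x)]
        simp [hij]
    by_cases hij : i = j
    · subst hij
      rw [if_pos rfl] at hsum ⊢
      linarith
    · rw [if_neg hij] at hsum ⊢
      linarith
  refine ⟨h1, fun v hv => ?_⟩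
  rw [h1]
  obtain ⟨i0, hi0⟩ : ∃ i, v i ≠ 0 := Function.ne_iff.mp hv
  have expand : ∑ i, ∑ j, v i * (A - (∑ k, B k) + C) i j * v j
      = (∑ i, ∑ j, v i * A i j * v j) - (∑ k, ∑ i, ∑ j, v i * B k i j * v j)
        + ∑ i, ∑ j, v i * C i j * v j := by
    have hpt : ∀ i j, v i * (A - (∑ k, B k) + C) i j * v j
        = v i * A i j * v j - (∑ k, v i * B k i j * v j) + v i * C i j * v j := by
      intro i j
      simp [Matrix.sub_apply, Matrix.add_apply, Matrix.sum_apply, sub_mul, add_mul,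
        mul_sub, mul_add, Finset.mul_sum, Finset.sum_mul]
    simp_rw [hpt, Finset.sum_add_distrib, Finset.sum_sub_distrib]
    congr 2
    calc (∑ i, ∑ j, ∑ k, v i * B k i j * v j)
        = ∑ i, ∑ k, ∑ j, v i * B k i j * v j :=
          Finset.sum_congr rfl fun i _ => Finset.sum_comm
      _ = ∑ k, ∑ i, ∑ j, v i * B k i j * v j := Finset.sum_comm
  rw [expand]
  have hQA : (∑ i, ∑ j, v i * A i j * v j) < 0 := by
    have hrow : ∀ i : Fin N, (∑ j, v i * A i j * v j) = pd2 (u i) i i x * (v i)^2 := by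
      intro i
      simp_rw [hA, mul_ite, ite_mul, mul_zero, zero_mul]
      rw [Finset.sum_ite_eq Finset.univ i (fun j => v i * pd2 (u i) i i x * v j)]
      simp; ring
    simp_rw [hrow]
    have hle : ∀ i ∈ Finset.univ, pd2 (u i) i i x * (v i)^2 ≤ (0:ℝ) := by
      intro i _
      have := ha i
      nlinarith [sq_nonneg (v i)]
    have hlt : pd2 (u i0) i0 i0 x * (v i0)^2 < 0 := by
      have h2 : 0 < (v i0)^2 := by positivity
      exact mul_neg_of_neg_of_pos (ha i0) h2
    calc (∑ i, pd2 (u i) i i x * (v i)^2) < ∑ _i : Fin N, (0:ℝ) :=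
          Finset.sum_lt_sum hle ⟨i0, Finset.mem_univ i0, hlt⟩
      _ = 0 := by simp
  have hQB : 0 ≤ ∑ k, ∑ i, ∑ j, v i * B k i j * v j :=
    Finset.sum_nonneg fun k _ => hb k v
  have hQC := hc v
  linarith
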